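/- arXiv:2106.01095 — 4 statements merged into one kernel-verified Lean document; each statement's English description precedes it below -/
import Mathlib

section
/- For any positive definite matrix A ∈ M_n(ℂ) and any nondecreasing concave function h : (0,∞) → ℝ with lim_{x→∞} h(x)/x = 0, one has Tr h(A) = inf over positive definite B ∈ M_n(ℂ) of Tr(A·B − ȟ(B)), where ȟ(t) = inf_{x>0} (t·x − h(x)) is the Legendre transform of h. -/
open Matrix
open scoped ComplexOrder

noncomputable def mF (f : ℝ → ℝ) {l : ℕ} (A : Matrix (Fin l) (Fin l) ℂ) :
    Matrix (Fin l) (Fin l) ℂ :=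
  if hA : A.IsHermitian then
    (hA.eigenvectorUnitary : Matrix (Fin l) (Fin l) ℂ) *
      Matrix.diagonal (fun i => (f (hA.eigenvalues i) : ℂ)) *
      star (hA.eigenvectorUnitary : Matrix (Fin l) (Fin l) ℂ)
  else 0

noncomputable def trF (f : ℝ → ℝ) {l : ℕ} (A : Matrix (Fin l) (Fin l) ℂ) : ℝ :=
  if hA : A.IsHermitian then ∑ i, f (hA.eigenvalues i) else 0

/-- Legendre transform of a concave function on `(0, ∞)`. -/
noncomputable def legendre (h : ℝ → ℝ) (t : ℝ) : ℝ :=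
  sInf ((fun x => t * x - h x) '' Set.Ioi 0)

section scalarLemmas

variable {h : ℝ → ℝ}

private lemma leg_nonempty (t : ℝ) : ((fun x => t * x - h x) '' Set.Ioi 0).Nonempty :=
  ⟨t * 1 - h 1, ⟨1, Set.mem_Ioi.mpr one_pos, rfl⟩⟩

private lemma leg_bddBelow (hmono : MonotoneOn h (Set.Ioi 0))
    (hlim : Filter.Tendsto (fun x => h x / x) Filter.atTop (nhds 0))
    {t : ℝ} (ht : 0 < t) :
    BddBelow ((fun x => t * x - h x) '' Set.Ioi 0) := by
  have hev : ∀ᶠ x in Filter.atTop, h x / x < t := hlim.eventually (gt_mem_nhds ht)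
  obtain ⟨X, hX⟩ := Filter.eventually_atTop.mp hev
  have hY1 : (1:ℝ) ≤ max X 1 := le_max_right _ _
  have hY0 : (0:ℝ) < max X 1 := lt_of_lt_of_le one_pos hY1
  refine ⟨min (-(h (max X 1))) 0, ?_⟩
  rintro _ ⟨x, hx, rfl⟩
  simp only [Set.mem_Ioi] at hx
  dsimp only
  rcases le_or_gt x (max X 1) with hxY | hxY
  · have h1 : h x ≤ h (max X 1) := hmono (Set.mem_Ioi.mpr hx) (Set.mem_Ioi.mpr hY0) hxY
    have h2 : 0 ≤ t * x := le_of_lt (mul_pos ht hx)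
    have h3 : min (-(h (max X 1))) 0 ≤ -(h (max X 1)) := min_le_left _ _
    nlinarith
  · have h1 := hX x (le_trans (le_max_left X 1) hxY.le)
    have hx' : 0 < x := lt_trans hY0 hxY
    rw [div_lt_iff₀ hx'] at h1
    have h2 : min (-(h (max X 1))) 0 ≤ 0 := min_le_right _ _
    nlinarith

private lemma leg_le (hmono : MonotoneOn h (Set.Ioi 0))
    (hlim : Filter.Tendsto (fun x => h x / x) Filter.atTop (nhds 0))
    {t x : ℝ} (ht : 0 < t) (hx : 0 < x) : legendre h t ≤ t * x - h x :=
  csInf_le (leg_bddBelow hmono hlim ht) ⟨x, Set.mem_Ioi.mpr hx, rfl⟩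

private lemma leg_concave (hmono : MonotoneOn h (Set.Ioi 0))
    (hlim : Filter.Tendsto (fun x => h x / x) Filter.atTop (nhds 0)) :
    ConcaveOn ℝ (Set.Ioi 0) (legendre h) := by
  refine ⟨convex_Ioi 0, fun t1 ht1 t2 ht2 a b ha hb hab => ?_⟩
  refine le_csInf (leg_nonempty _) ?_
  rintro _ ⟨x, hx, rfl⟩
  simp only [Set.mem_Ioi] at hx ht1 ht2
  have h1 := leg_le hmono hlim ht1 hx
  have h2 := leg_le hmono hlim ht2 hx
  have h1' := mul_le_mul_of_nonneg_left h1 ha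
  have h2' := mul_le_mul_of_nonneg_left h2 hb
  simp only [smul_eq_mul]
  calc a * legendre h t1 + b * legendre h t2
      ≤ a * (t1 * x - h x) + b * (t2 * x - h x) := add_le_add h1' h2'
    _ = (a * t1 + b * t2) * x - h x := by linear_combination (-(h x)) * hab

private lemma leg_biconj (hmono : MonotoneOn h (Set.Ioi 0))
    (hconc : ConcaveOn ℝ (Set.Ioi 0) h)
    (hlim : Filter.Tendsto (fun x => h x / x) Filter.atTop (nhds 0))
    {l : ℝ} (hl : 0 < l) {ε : ℝ} (hε : 0 < ε) :
    ∃ t, 0 < t ∧ t * l - legendre h t < h l + ε := by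
  have hcont : ContinuousOn h (Set.Ioi 0) := hconc.continuousOn isOpen_Ioi
  have hat : ContinuousAt h l := hcont.continuousAt (isOpen_Ioi.mem_nhds hl)
  have hball := Metric.continuousAt_iff.mp hat (ε/4) (by linarith)
  obtain ⟨δ', hδ'pos, hδ'⟩ := hball
  set δ := min (δ'/2) (l/2) with hδdef
  have hδpos : 0 < δ := lt_min (by linarith) (by linarith)
  have hδl : δ < l := lt_of_le_of_lt (min_le_right _ _) (by linarith)
  have hmem : l - δ ∈ Set.Ioi (0:ℝ) := Set.mem_Ioi.mpr (by linarith)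
  have hldm : h (l - δ) ≤ h l := hmono hmem (Set.mem_Ioi.mpr hl) (by linarith)
  have hclose : h l - h (l - δ) < ε/4 := by
    have : dist (l - δ) l < δ' := by
      rw [Real.dist_eq]
      have : |l - δ - l| = δ := by rw [show l - δ - l = -δ by ring, abs_neg, abs_of_pos hδpos]
      rw [this]
      exact lt_of_le_of_lt (min_le_left _ _) (by linarith)
    have := hδ' this
    rw [Real.dist_eq, abs_lt] at this
    linarith
  set t := (h l - h (l - δ)) / δ with htdef
  have ht0 : 0 ≤ t := div_nonneg (by linarith) hδpos.le
  rcases eq_or_lt_of_le ht0 with hteq | htpos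
  · -- t = 0 : h is maximized at l
    have hflat : h (l - δ) = h l := by
      rw [htdef] at hteq
      rcases div_eq_zero_iff.mp hteq.symm with h' | h'
      · linarith
      · exact absurd h' hδpos.ne'
    have hbound : ∀ x ∈ Set.Ioi (0:ℝ), h x ≤ h l := by
      intro x hx
      simp only [Set.mem_Ioi] at hx
      rcases le_or_gt x l with hxl | hxl
      · exact hmono (Set.mem_Ioi.mpr hx) (Set.mem_Ioi.mpr hl) hxl
      · have hs := hconc.slope_anti_adjacent hmem (Set.mem_Ioi.mpr (lt_trans hl hxl))
          (show l - δ < l by linarith) hxl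
        have hnum : (h l - h (l - δ)) / (l - (l - δ)) = 0 := by
          rw [show l - (l - δ) = δ by ring, hflat]; simp
        rw [hnum] at hs
        have hxl' : 0 < x - l := by linarith
        have := (div_nonpos_iff.mp hs)
        rcases this with ⟨h1, h2⟩ | ⟨h1, h2⟩
        · linarith
        · linarith
    refine ⟨ε / (2 * l), by positivity, ?_⟩
    have hleg : -(h l) ≤ legendre h (ε / (2 * l)) := by
      refine le_csInf (leg_nonempty _) ?_
      rintro _ ⟨x, hx, rfl⟩
      have hx' : 0 < x := hx
      have h1 : h x ≤ h l := hbound x hx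
      have h2 : 0 ≤ ε / (2 * l) * x := by positivity
      dsimp only
      linarith
    have : ε / (2 * l) * l = ε / 2 := by field_simp
    linarith
  · -- t > 0
    refine ⟨t, htpos, ?_⟩
    have hlb : ∀ x ∈ Set.Ioi (0:ℝ), t * l - h l - ε/4 ≤ t * x - h x := by
      intro x hx
      simp only [Set.mem_Ioi] at hx
      rcases lt_trichotomy x l with hxl | rfl | hxl
      · rcases lt_or_ge x (l - δ) with hxd | hxd
        · -- x < l - δ : slope(x,l) ≥ t
          have hneg := hconc.neg
          have hs := hneg.secant_mono (Set.mem_Ioi.mpr hl) (Set.mem_Ioi.mpr hx) hmem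
            (by linarith : x ≠ l) (by linarith : l - δ ≠ l) hxd.le
          simp only [Pi.neg_apply] at hs
          have hrhs : (-h (l - δ) - -h l) / (l - δ - l) = -t := by
            rw [htdef, show l - δ - l = -δ by ring,
              show -h (l - δ) - -h l = h l - h (l - δ) by ring, div_neg]
          rw [hrhs] at hs
          rw [div_le_iff_of_neg (by linarith : x - l < 0)] at hs
          nlinarith
        · -- l - δ ≤ x < l
          have h1 : h x ≤ h l := hmono (Set.mem_Ioi.mpr hx) (Set.mem_Ioi.mpr hl) hxl.le
          have h2 : t * x ≥ t * (l - δ) := by nlinarith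
          have h3 : t * δ = h l - h (l - δ) := by
            rw [htdef]; exact div_mul_cancel₀ _ hδpos.ne'
          nlinarith
      · linarith
      · -- x > l : slope(l,x) ≤ t
        have hs := hconc.slope_anti_adjacent hmem (Set.mem_Ioi.mpr (lt_trans hl hxl))
          (show l - δ < l by linarith) hxl
        have hrhs : (h l - h (l - δ)) / (l - (l - δ)) = t := by
          rw [htdef, show l - (l - δ) = δ by ring]
        rw [hrhs] at hs
        rw [div_le_iff₀ (by linarith : (0:ℝ) < x - l)] at hs
        nlinarith
    have hleg : t * l - h l - ε/4 ≤ legendre h t := by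
      refine le_csInf (leg_nonempty _) ?_
      rintro _ ⟨x, hx, rfl⟩
      exact hlb x hx
    linarith

end scalarLemmas

section matrixLemmas


variable {n : ℕ}

private lemma trace_diagonal_mul (d : Fin n → ℂ) (M : Matrix (Fin n) (Fin n) ℂ) :
    Matrix.trace (Matrix.diagonal d * M) = ∑ i, d i * M i i := by
  simp [Matrix.trace, Matrix.diag, Matrix.diagonal_mul]

private lemma trace_unitary_conj {U : Matrix (Fin n) (Fin n) ℂ}
    (hUU : star U * U = 1) (M : Matrix (Fin n) (Fin n) ℂ) :
    Matrix.trace (U * M * star U) = Matrix.trace M := by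
  rw [Matrix.trace_mul_cycle, hUU, Matrix.one_mul]

private lemma conj_diag_entry (W : Matrix (Fin n) (Fin n) ℂ) (d : Fin n → ℝ) (i : Fin n) :
    ((W * Matrix.diagonal (fun j => (d j : ℂ)) * star W) i i).re
      = ∑ j, d j * Complex.normSq (W i j) := by
  have h1 : (W * Matrix.diagonal (fun j => (d j : ℂ)) * star W) i i
      = ∑ j, W i j * (d j : ℂ) * (starRingEnd ℂ) (W i j) := by
    simp only [Matrix.mul_apply, Matrix.star_apply, Matrix.conjTranspose_apply,
      Matrix.diagonal_apply, mul_ite, mul_zero, Finset.sum_ite_eq', Finset.mem_univ, if_true]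
    rfl
  have h2 : ∀ j, W i j * (d j : ℂ) * (starRingEnd ℂ) (W i j)
      = ((d j * Complex.normSq (W i j) : ℝ) : ℂ) := by
    intro j
    calc W i j * (d j : ℂ) * (starRingEnd ℂ) (W i j)
        = (d j : ℂ) * (W i j * (starRingEnd ℂ) (W i j)) := by ring
      _ = (d j : ℂ) * (Complex.normSq (W i j) : ℂ) := by rw [Complex.mul_conj]
      _ = _ := by push_cast; ring
  rw [h1]
  simp only [h2]
  rw [← Complex.ofReal_sum]
  exact Complex.ofReal_re _

private lemma rowsum_normSq {W : Matrix (Fin n) (Fin n) ℂ}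
    (hW : W * star W = 1) (i : Fin n) : ∑ j, Complex.normSq (W i j) = 1 := by
  have h1 : (W * star W) i i = ∑ j, (Complex.normSq (W i j) : ℂ) := by
    simp [Matrix.mul_apply, Matrix.star_apply, Matrix.conjTranspose_apply, Complex.mul_conj]
  rw [hW, Matrix.one_apply_eq] at h1
  have := congrArg Complex.re h1.symm
  rw [← Complex.ofReal_sum] at this
  simpa using this

private lemma colsum_normSq {W : Matrix (Fin n) (Fin n) ℂ}
    (hW : star W * W = 1) (j : Fin n) : ∑ i, Complex.normSq (W i j) = 1 := by
  have h1 : (star W * W) j j = ∑ i, (Complex.normSq (W i j) : ℂ) := by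
    simp only [Matrix.mul_apply, Matrix.star_apply, Matrix.conjTranspose_apply]
    congr 1
    ext i
    rw [mul_comm, Complex.star_def, Complex.mul_conj]
  rw [hW, Matrix.one_apply_eq] at h1
  have := congrArg Complex.re h1.symm
  rw [← Complex.ofReal_sum] at this
  simpa using this

private lemma posdef_conj {U D : Matrix (Fin n) (Fin n) ℂ}
    (hUU' : U * star U = 1) (hD : D.PosDef) : (U * D * star U).PosDef := by
  have key : U * D * star U = (star U)ᴴ * D * (star U) := by
    rw [← Matrix.star_eq_conjTranspose, star_star]
  refine Matrix.PosDef.of_dotProduct_mulVec_pos ?_ ?_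
  · rw [key]
    exact Matrix.isHermitian_conjTranspose_mul_mul (star U) hD.1
  · intro x hx
    have hx' : star U *ᵥ x ≠ 0 := by
      intro h0
      apply hx
      calc x = (U * star U) *ᵥ x := by rw [hUU', Matrix.one_mulVec]
        _ = U *ᵥ (star U *ᵥ x) := by rw [← Matrix.mulVec_mulVec]
        _ = 0 := by rw [h0, Matrix.mulVec_zero]
    have h2 := hD.dotProduct_mulVec_pos hx'
    rw [key]
    simpa only [Matrix.star_mulVec, Matrix.dotProduct_mulVec, Matrix.vecMul_vecMul] using h2



variable {n : ℕ}

private lemma trF_eq {M : Matrix (Fin n) (Fin n) ℂ} (hM : M.IsHermitian) (f : ℝ → ℝ) :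
    trF f M = ∑ i, f (hM.eigenvalues i) := by
  unfold trF
  rw [dif_pos hM]

private lemma trace_cfc' {M : Matrix (Fin n) (Fin n) ℂ} (hM : M.IsHermitian) (f : ℝ → ℝ) :
    Matrix.trace (cfc f M) = ((∑ i, f (hM.eigenvalues i) : ℝ) : ℂ) := by
  rw [hM.cfc_eq f]
  show Matrix.trace ((hM.eigenvectorUnitary : Matrix (Fin n) (Fin n) ℂ) *
    Matrix.diagonal (RCLike.ofReal ∘ f ∘ hM.eigenvalues) *
    star (hM.eigenvectorUnitary : Matrix (Fin n) (Fin n) ℂ)) = _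
  rw [trace_unitary_conj (Unitary.coe_star_mul_self hM.eigenvectorUnitary),
    Matrix.trace_diagonal]
  push_cast
  rfl

private lemma trF_cfc {M : Matrix (Fin n) (Fin n) ℂ} (hM : M.IsHermitian) (f : ℝ → ℝ) :
    trF f M = (Matrix.trace (cfc f M)).re := by
  rw [trF_eq hM f, trace_cfc' hM f, Complex.ofReal_re]

private lemma cfc_comp_finite {M : Matrix (Fin n) (Fin n) ℂ} (hM : M.IsHermitian)
    (g f : ℝ → ℝ) : cfc (fun x => g (f x)) M = cfc g (cfc f M) :=
  cfc_comp' g f M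
    (((Matrix.finite_real_spectrum (A := M)).image f).continuousOn g)
    ((Matrix.finite_real_spectrum (A := M)).continuousOn f) hM.isSelfAdjoint

private lemma cfc_eq_conj {M : Matrix (Fin n) (Fin n) ℂ} (hM : M.IsHermitian) (f : ℝ → ℝ) :
    cfc f M = (hM.eigenvectorUnitary : Matrix (Fin n) (Fin n) ℂ) *
      Matrix.diagonal (fun i => (f (hM.eigenvalues i) : ℂ)) *
      star (hM.eigenvectorUnitary : Matrix (Fin n) (Fin n) ℂ) := by
  rw [hM.cfc_eq f]
  rfl

end matrixLemmas

theorem stmt0 {n : ℕ} (h : ℝ → ℝ)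
    (hmono : MonotoneOn h (Set.Ioi 0)) (hconc : ConcaveOn ℝ (Set.Ioi 0) h)
    (hlim : Filter.Tendsto (fun x => h x / x) Filter.atTop (nhds 0))
    (A : Matrix (Fin n) (Fin n) ℂ) (hA : A.PosDef) :
    trF h A = sInf ((fun B : Matrix (Fin n) (Fin n) ℂ =>
        (Matrix.trace (A * B)).re - trF (legendre h) B) ''
      {B : Matrix (Fin n) (Fin n) ℂ | B.PosDef}) := by
  classical
  have hAh : A.IsHermitian := hA.1
  set U : Matrix (Fin n) (Fin n) ℂ := (hAh.eigenvectorUnitary : Matrix (Fin n) (Fin n) ℂ)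
    with hUdef
  have hUU : star U * U = 1 := Unitary.coe_star_mul_self hAh.eigenvectorUnitary
  have hUU' : U * star U = 1 := Unitary.coe_mul_star_self hAh.eigenvectorUnitary
  have hspec : A = U * Matrix.diagonal (fun i => (hAh.eigenvalues i : ℂ)) * star U :=
    hAh.spectral_theorem
  have hlam : ∀ i, 0 < hAh.eigenvalues i := hA.eigenvalues_pos
  -- Lower bound
  have hlower : ∀ B : Matrix (Fin n) (Fin n) ℂ, B.PosDef →
      trF h A ≤ (Matrix.trace (A * B)).re - trF (legendre h) B := by
    intro B hB
    have hBh : B.IsHermitian := hB.1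
    set V : Matrix (Fin n) (Fin n) ℂ := (hBh.eigenvectorUnitary : Matrix (Fin n) (Fin n) ℂ)
      with hVdef
    have hVV : star V * V = 1 := Unitary.coe_star_mul_self hBh.eigenvectorUnitary
    have hVV' : V * star V = 1 := Unitary.coe_mul_star_self hBh.eigenvectorUnitary
    have hspecB : B = V * Matrix.diagonal (fun j => (hBh.eigenvalues j : ℂ)) * star V :=
      hBh.spectral_theorem
    have hmu : ∀ j, 0 < hBh.eigenvalues j := hB.eigenvalues_pos
    have hWW : (star U * V) * star (star U * V) = 1 := by
      rw [Matrix.star_mul, star_star, Matrix.mul_assoc, ← Matrix.mul_assoc V, hVV',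
        Matrix.one_mul, hUU]
    have hWW2 : star (star U * V) * (star U * V) = 1 := by
      rw [Matrix.star_mul, star_star, Matrix.mul_assoc, ← Matrix.mul_assoc U, hUU',
        Matrix.one_mul, hVV]
    set q : Fin n → Fin n → ℝ := fun i j => Complex.normSq ((star U * V) i j) with hqdef
    have hq0 : ∀ i j, 0 ≤ q i j := fun i j => Complex.normSq_nonneg _
    have hq1 : ∀ i, ∑ j, q i j = 1 := fun i => rowsum_normSq hWW i
    have hq2 : ∀ j, ∑ i, q i j = 1 := fun j => colsum_normSq hWW2 j
    set d : Fin n → ℝ := fun i => ∑ j, hBh.eigenvalues j * q i j with hddef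
    have hd : ∀ i, 0 < d i := by
      intro i
      have hne : ∑ j, q i j ≠ 0 := by rw [hq1 i]; norm_num
      obtain ⟨j, _, hj⟩ := Finset.exists_ne_zero_of_sum_ne_zero hne
      exact Finset.sum_pos'
        (fun k _ => mul_nonneg (hmu k).le (hq0 i k))
        ⟨j, Finset.mem_univ j, mul_pos (hmu j) (lt_of_le_of_ne (hq0 i j) (Ne.symm hj))⟩
    have hC : star U * B * U = (star U * V) *
        Matrix.diagonal (fun j => (hBh.eigenvalues j : ℂ)) * star (star U * V) := by
      conv_lhs => rw [hspecB]
      simp only [Matrix.star_mul, star_star, Matrix.mul_assoc]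
    have hCii : ∀ i, ((star U * B * U) i i).re = d i := by
      intro i
      rw [hC]
      exact conj_diag_entry _ _ i
    have htr : (Matrix.trace (A * B)).re = ∑ i, hAh.eigenvalues i * d i := by
      have h1 : Matrix.trace (A * B) =
          Matrix.trace (Matrix.diagonal (fun i => (hAh.eigenvalues i : ℂ)) *
            (star U * B * U)) := by
        conv_lhs => rw [hspec]
        rw [Matrix.mul_assoc (U * Matrix.diagonal fun i => (hAh.eigenvalues i : ℂ)) (star U) B,
          Matrix.trace_mul_comm, ← Matrix.mul_assoc (star U * B) U,
          Matrix.trace_mul_comm]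
      rw [h1, trace_diagonal_mul, Complex.re_sum]
      refine Finset.sum_congr rfl fun i _ => ?_
      rw [Complex.re_ofReal_mul, hCii i]
    have htrF : trF (legendre h) B = ∑ j, legendre h (hBh.eigenvalues j) := trF_eq hBh _
    have hJ : ∀ i, ∑ j, q i j * legendre h (hBh.eigenvalues j) ≤ legendre h (d i) := by
      intro i
      have hd' : ∑ j, q i j • hBh.eigenvalues j = d i := by
        rw [hddef]
        exact Finset.sum_congr rfl fun j _ => by rw [smul_eq_mul, mul_comm]
      have := (leg_concave hmono hlim).le_map_sum (t := Finset.univ) (w := q i)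
        (p := hBh.eigenvalues) (fun j _ => hq0 i j) (hq1 i)
        (fun j _ => Set.mem_Ioi.mpr (hmu j))
      rw [hd'] at this
      simpa [smul_eq_mul] using this
    have hsum : ∑ j, legendre h (hBh.eigenvalues j) ≤ ∑ i, legendre h (d i) := by
      calc ∑ j, legendre h (hBh.eigenvalues j)
          = ∑ j, (∑ i, q i j) * legendre h (hBh.eigenvalues j) := by
            refine Finset.sum_congr rfl fun j _ => ?_
            rw [hq2 j, one_mul]
        _ = ∑ i, ∑ j, q i j * legendre h (hBh.eigenvalues j) := by
            rw [Finset.sum_comm]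
            exact Finset.sum_congr rfl fun j _ => Finset.sum_mul _ _ _
        _ ≤ ∑ i, legendre h (d i) := Finset.sum_le_sum fun i _ => hJ i
    have hkey : ∀ i, h (hAh.eigenvalues i) ≤ hAh.eigenvalues i * d i - legendre h (d i) := by
      intro i
      have := leg_le hmono hlim (hd i) (hlam i)
      linarith
    calc trF h A = ∑ i, h (hAh.eigenvalues i) := trF_eq hAh h
      _ ≤ ∑ i, (hAh.eigenvalues i * d i - legendre h (d i)) :=
          Finset.sum_le_sum fun i _ => hkey i
      _ = ∑ i, hAh.eigenvalues i * d i - ∑ i, legendre h (d i) := Finset.sum_sub_distrib _ _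
      _ ≤ ∑ i, hAh.eigenvalues i * d i - ∑ j, legendre h (hBh.eigenvalues j) := by linarith
      _ = (Matrix.trace (A * B)).re - trF (legendre h) B := by rw [htr, htrF]
  have hSne : ((fun B : Matrix (Fin n) (Fin n) ℂ =>
      (Matrix.trace (A * B)).re - trF (legendre h) B) ''
      {B : Matrix (Fin n) (Fin n) ℂ | B.PosDef}).Nonempty :=
    ⟨_, ⟨1, Matrix.PosDef.one, rfl⟩⟩
  have hSbdd : BddBelow ((fun B : Matrix (Fin n) (Fin n) ℂ =>
      (Matrix.trace (A * B)).re - trF (legendre h) B) ''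
      {B : Matrix (Fin n) (Fin n) ℂ | B.PosDef}) := by
    refine ⟨trF h A, ?_⟩
    rintro _ ⟨B, hB, rfl⟩
    exact hlower B hB
  refine le_antisymm (le_csInf hSne ?_) ?_
  · rintro _ ⟨B, hB, rfl⟩
    exact hlower B hB
  · refine le_of_forall_pos_le_add fun ε hε => ?_
    have hε' : 0 < ε / (n + 1) := by positivity
    set g : ℝ → ℝ := fun x => if hx : 0 < x then
        (leg_biconj hmono hconc hlim hx hε').choose else 1 with hgdef
    have hg : ∀ x (hx : 0 < x), 0 < g x ∧
        g x * x - legendre h (g x) < h x + ε / (n + 1) := by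
      intro x hx
      simp only [hgdef, dif_pos hx]
      exact (leg_biconj hmono hconc hlim hx hε').choose_spec
    set B : Matrix (Fin n) (Fin n) ℂ :=
      U * Matrix.diagonal (fun i => (g (hAh.eigenvalues i) : ℂ)) * star U with hBdef
    have hDpos : (Matrix.diagonal (fun i => (g (hAh.eigenvalues i) : ℂ))).PosDef := by
      refine Matrix.posDef_diagonal_iff.mpr fun i => ?_
      rw [Complex.zero_lt_real]
      exact (hg _ (hlam i)).1
    have hBpos : B.PosDef := posdef_conj hUU' hDpos
    have hBcfc : B = cfc g A := by
      rw [cfc_eq_conj hAh g, hBdef, hUdef]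
    have htrB : (Matrix.trace (A * B)).re = ∑ i, hAh.eigenvalues i * g (hAh.eigenvalues i) := by
      have h1 : A * B = U * (Matrix.diagonal (fun i => (hAh.eigenvalues i : ℂ)) *
          Matrix.diagonal (fun i => (g (hAh.eigenvalues i) : ℂ))) * star U := by
        conv_lhs => rw [hspec, hBdef]
        simp only [Matrix.mul_assoc]
        rw [← Matrix.mul_assoc (star U) U, hUU, Matrix.one_mul]
      rw [h1, trace_unitary_conj hUU, Matrix.diagonal_mul_diagonal, Matrix.trace_diagonal]
      rw [Complex.re_sum]
      refine Finset.sum_congr rfl fun i _ => ?_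
      rw [← Complex.ofReal_mul, Complex.ofReal_re]
    have htrFB : trF (legendre h) B = ∑ i, legendre h (g (hAh.eigenvalues i)) := by
      rw [trF_cfc hBpos.1 (legendre h), hBcfc, ← cfc_comp_finite hAh (legendre h) g,
        trace_cfc' hAh, Complex.ofReal_re]
    have hval : (Matrix.trace (A * B)).re - trF (legendre h) B ≤ trF h A + ε := by
      rw [htrB, htrFB, trF_eq hAh h]
      have hterm : ∀ i, hAh.eigenvalues i * g (hAh.eigenvalues i) -
          legendre h (g (hAh.eigenvalues i)) ≤ h (hAh.eigenvalues i) + ε / (n + 1) := by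
        intro i
        have := (hg _ (hlam i)).2
        linarith [mul_comm (hAh.eigenvalues i) (g (hAh.eigenvalues i))]
      calc ∑ i, hAh.eigenvalues i * g (hAh.eigenvalues i) -
            ∑ i, legendre h (g (hAh.eigenvalues i))
          = ∑ i, (hAh.eigenvalues i * g (hAh.eigenvalues i) -
              legendre h (g (hAh.eigenvalues i))) := (Finset.sum_sub_distrib _ _).symm
        _ ≤ ∑ i, (h (hAh.eigenvalues i) + ε / (n + 1)) :=
            Finset.sum_le_sum fun i _ => hterm i
        _ = ∑ i, h (hAh.eigenvalues i) + n * (ε / (n + 1)) := by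
            rw [Finset.sum_add_distrib, Finset.sum_const, Finset.card_univ, Fintype.card_fin,
              nsmul_eq_mul]
        _ ≤ ∑ i, h (hAh.eigenvalues i) + ε := by
            have : (n : ℝ) * (ε / (n + 1)) ≤ ε := by
              rw [mul_div_assoc']
              rw [div_le_iff₀ (by positivity : (0:ℝ) < (n:ℝ) + 1)]
              nlinarith [hε.le]
            linarith
    exact le_trans (csInf_le hSbdd ⟨B, hBpos, rfl⟩) hval
end

section
/- Let f : (0,∞) → ℝ be convex on an interval J, and let C_1, …, C_k ∈ M_n(ℂ) satisfy Σᵢ Cᵢ* Cᵢ = I_n. Then for any Hermitian A_1, …, A_k ∈ M_n(ℂ) with spectra contained in J, Tr f(Σᵢ Cᵢ* Aᵢ Cᵢ) ≤ Tr(Σᵢ Cᵢ* f(Aᵢ) Cᵢ). -/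
open Matrix

/-- Diagonal entry of a quadratic form `Tᴴ D T` with real diagonal `d`. -/
lemma quad_apply {n : ℕ} (T : Matrix (Fin n) (Fin n) ℂ) (d : Fin n → ℝ) (j : Fin n) :
    (Tᴴ * Matrix.diagonal (fun l => (d l : ℂ)) * T) j j
      = ((∑ l, d l * Complex.normSq (T l j) : ℝ) : ℂ) := by
  rw [Matrix.mul_assoc, Matrix.mul_apply]
  push_cast
  refine Finset.sum_congr rfl fun l _ => ?_
  rw [Matrix.diagonal_mul, Matrix.conjTranspose_apply]
  rw [Complex.normSq_eq_conj_mul_self]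
  simp only [Complex.star_def]
  ring

lemma quad_apply_one {n : ℕ} (T : Matrix (Fin n) (Fin n) ℂ) (j : Fin n) :
    (Tᴴ * T) j j = ((∑ l, Complex.normSq (T l j) : ℝ) : ℂ) := by
  rw [Matrix.mul_apply]
  push_cast
  refine Finset.sum_congr rfl fun l _ => ?_
  rw [Matrix.conjTranspose_apply, Complex.normSq_eq_conj_mul_self]
  simp [Complex.star_def]

theorem stmt2 {n k : ℕ} (J : Set ℝ) (f : ℝ → ℝ) (hf : ConvexOn ℝ J f)
    (C A : Fin k → Matrix (Fin n) (Fin n) ℂ)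
    (hC : ∑ i, (C i)ᴴ * C i = 1)
    (hA : ∀ i, (A i).IsHermitian)
    (hspec : ∀ i j, (hA i).eigenvalues j ∈ J) :
    trF f (∑ i, (C i)ᴴ * A i * C i) ≤
      (Matrix.trace (∑ i, (C i)ᴴ * mF f (A i) * C i)).re := by
  classical
  have hB : (∑ i, (C i)ᴴ * A i * C i).IsHermitian := by
    rw [Matrix.IsHermitian, Matrix.conjTranspose_sum]
    refine Finset.sum_congr rfl fun i _ => ?_
    simp [Matrix.conjTranspose_mul, Matrix.mul_assoc, (hA i).eq]
  set u : Matrix (Fin n) (Fin n) ℂ := (hB.eigenvectorUnitary : Matrix (Fin n) (Fin n) ℂ) with hu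
  set μ : Fin n → ℝ := hB.eigenvalues with hμdef
  set v : Fin k → Matrix (Fin n) (Fin n) ℂ :=
    fun i => ((hA i).eigenvectorUnitary : Matrix (Fin n) (Fin n) ℂ) with hv
  set lam : Fin k → Fin n → ℝ := fun i => (hA i).eigenvalues with hlam
  set T : Fin k → Matrix (Fin n) (Fin n) ℂ := fun i => star (v i) * C i * u with hT
  have huu : star u * u = 1 := Matrix.mem_unitaryGroup_iff'.mp hB.eigenvectorUnitary.2
  have huu' : u * star u = 1 := Matrix.mem_unitaryGroup_iff.mp hB.eigenvectorUnitary.2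
  have hvv : ∀ i, v i * star (v i) = 1 :=
    fun i => Matrix.mem_unitaryGroup_iff.mp (hA i).eigenvectorUnitary.2
  -- conjugation helper
  have hconj : ∀ (i : Fin k) (D : Matrix (Fin n) (Fin n) ℂ),
      star u * ((C i)ᴴ * (v i * D * star (v i)) * C i) * u
        = (T i)ᴴ * D * T i := by
    intro i D
    have : (T i)ᴴ = star u * (C i)ᴴ * v i := by
      simp [hT, Matrix.conjTranspose_mul, Matrix.star_eq_conjTranspose, Matrix.mul_assoc]
    rw [this, hT]
    simp only [Matrix.mul_assoc]
  -- identity 1 : diagonal μ = ∑ i, (T i)ᴴ diag(lam i) (T i)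
  have h1 : Matrix.diagonal (fun j => (μ j : ℂ)) = ∑ i, (T i)ᴴ *
      Matrix.diagonal (fun l => (lam i l : ℂ)) * T i := by
    have hs : star u * (∑ i, (C i)ᴴ * A i * C i) * u = diagonal (RCLike.ofReal ∘ hB.eigenvalues) := by
      have := hB.conjStarAlgAut_star_eigenvectorUnitary
      rwa [Unitary.conjStarAlgAut_apply, Unitary.coe_star, star_star] at this
    rw [show (RCLike.ofReal ∘ hB.eigenvalues : Fin n → ℂ) = fun j => (μ j : ℂ) from rfl] at hs
    rw [← hs, Finset.mul_sum, Finset.sum_mul]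
    refine Finset.sum_congr rfl fun i _ => ?_
    conv_lhs => rw [(hA i).spectral_theorem, Unitary.conjStarAlgAut_apply]
    exact hconj i _
  -- identity 2 : 1 = ∑ i, (T i)ᴴ (T i)
  have h2 : (1 : Matrix (Fin n) (Fin n) ℂ) = ∑ i, (T i)ᴴ * T i := by
    have : star u * (∑ i, (C i)ᴴ * C i) * u = ∑ i, (T i)ᴴ * T i := by
      rw [Finset.mul_sum, Finset.sum_mul]
      refine Finset.sum_congr rfl fun i _ => ?_
      have := hconj i 1
      rw [mul_one, Matrix.mul_one] at this
      rw [← this, hvv i]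
      simp [Matrix.mul_assoc]
    rw [← this, hC, mul_one, huu]
  -- identity 3 : the RHS trace
  have h3 : Matrix.trace (∑ i, (C i)ᴴ * mF f (A i) * C i)
      = Matrix.trace (∑ i, (T i)ᴴ *
          Matrix.diagonal (fun l => (f (lam i l) : ℂ)) * T i) := by
    have : ∑ i, (T i)ᴴ * Matrix.diagonal (fun l => (f (lam i l) : ℂ)) * T i
        = star u * (∑ i, (C i)ᴴ * mF f (A i) * C i) * u := by
      rw [Finset.mul_sum, Finset.sum_mul]
      refine Finset.sum_congr rfl fun i _ => ?_
      rw [mF, dif_pos (hA i)]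
      exact (hconj i _).symm
    rw [this, Matrix.trace_mul_cycle, huu', one_mul]
  -- weights
  set w : Fin n → Fin k × Fin n → ℝ :=
    fun j p => Complex.normSq (T p.1 p.2 j) with hw
  have hw0 : ∀ j p, 0 ≤ w j p := fun j p => Complex.normSq_nonneg _
  have hw1 : ∀ j, ∑ p : Fin k × Fin n, w j p = 1 := by
    intro j
    have h2j := congrFun (congrFun h2 j) j
    rw [Matrix.sum_apply] at h2j
    have heq : ((1:ℝ):ℂ) = ((∑ i, ∑ l, Complex.normSq (T i l j) : ℝ) : ℂ) := by
      rw [show ((1:ℝ):ℂ) = (1 : Matrix (Fin n) (Fin n) ℂ) j j by simp, h2j]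
      push_cast
      exact Finset.sum_congr rfl fun i _ => by rw [quad_apply_one (T i) j]; push_cast; rfl
    have hr : (1:ℝ) = ∑ i, ∑ l, Complex.normSq (T i l j) := Complex.ofReal_injective heq
    rw [Fintype.sum_prod_type]
    simp only [hw]
    exact hr.symm
  have hmu : ∀ j, μ j = ∑ p : Fin k × Fin n, w j p • lam p.1 p.2 := by
    intro j
    have := congrFun (congrFun h1 j) j
    rw [Matrix.sum_apply, Matrix.diagonal_apply_eq] at this
    have h2' : ((μ j : ℝ) : ℂ) = ((∑ i, ∑ l, lam i l * Complex.normSq (T i l j) : ℝ) : ℂ) := by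
      rw [this]; push_cast
      exact Finset.sum_congr rfl fun i _ => by
        have := quad_apply (T i) (lam i) j
        rw [this]; push_cast; ring
    have := Complex.ofReal_injective h2'
    rw [this, Fintype.sum_prod_type]
    exact Finset.sum_congr rfl fun i _ => Finset.sum_congr rfl fun l _ => by
      simp [hw, smul_eq_mul]; ring
  -- RHS real value
  have hRHS : (Matrix.trace (∑ i, (C i)ᴴ * mF f (A i) * C i)).re
      = ∑ j, ∑ p : Fin k × Fin n, w j p • f (lam p.1 p.2) := by
    rw [h3, Matrix.trace_sum]
    have : ∀ i, Matrix.trace ((T i)ᴴ * Matrix.diagonal (fun l => (f (lam i l) : ℂ)) * T i)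
        = ((∑ j, ∑ l, f (lam i l) * Complex.normSq (T i l j) : ℝ) : ℂ) := by
      intro i
      rw [Matrix.trace]
      push_cast
      refine Finset.sum_congr rfl fun j _ => ?_
      have := quad_apply (T i) (fun l => f (lam i l)) j
      rw [Matrix.diag_apply, this]
      push_cast
      rfl
    rw [Finset.sum_congr rfl fun i _ => this i, ← Complex.ofReal_sum, Complex.ofReal_re]
    rw [Finset.sum_comm]
    refine Finset.sum_congr rfl fun j _ => ?_
    rw [Fintype.sum_prod_type]
    exact Finset.sum_congr rfl fun i _ => Finset.sum_congr rfl fun l _ => by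
      simp [hw, smul_eq_mul]; ring
  -- LHS value
  have hLHS : trF f (∑ i, (C i)ᴴ * A i * C i) = ∑ j, f (μ j) := by
    rw [trF, dif_pos hB]
  rw [hLHS, hRHS]
  refine Finset.sum_le_sum fun j _ => ?_
  have := hf.map_sum_le (t := Finset.univ) (w := w j) (p := fun p => lam p.1 p.2)
    (fun p _ => hw0 j p) (hw1 j) (fun p _ => hspec p.1 p.2)
  rw [← hmu j] at this
  exact this
end

section
/- If h : (0,∞) → ℝ is concave, then the map A ↦ Tr h(A) on positive definite n×n matrices is concave: Tr h((A+B)/2) ≥ (Tr h(A) + Tr h(B))/2 for all positive definite A, B. -/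
open Matrix
open scoped ComplexOrder

-- diagonal entry as quadratic form
lemma diag_eq_dot {n : ℕ} (A V : Matrix (Fin n) (Fin n) ℂ) (i : Fin n) :
    (star V * A * V) i i = star (fun k => V k i) ⬝ᵥ (A *ᵥ (fun k => V k i)) := by
  simp only [Matrix.mul_apply, dotProduct, Matrix.mulVec, Matrix.star_apply, Pi.star_apply,
    dotProduct, Finset.sum_mul, Finset.mul_sum]
  rw [Finset.sum_comm]
  apply Finset.sum_congr rfl; intro k _
  apply Finset.sum_congr rfl; intro l _
  ring

lemma col_ne_zero {n : ℕ} {V : Matrix (Fin n) (Fin n) ℂ}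
    (hV : V ∈ Matrix.unitaryGroup (Fin n) ℂ) (i : Fin n) :
    (fun k => V k i) ≠ 0 := by
  intro h0
  have h1 : (star V * V) i i = 1 := by
    rw [(Matrix.mem_unitaryGroup_iff').mp hV]; simp
  rw [show star V * V = star V * 1 * V by rw [mul_one], diag_eq_dot, h0] at h1
  simp at h1

lemma diag_pos {n : ℕ} {A : Matrix (Fin n) (Fin n) ℂ} (hA : A.PosDef)
    {V : Matrix (Fin n) (Fin n) ℂ} (hV : V ∈ Matrix.unitaryGroup (Fin n) ℂ) (i : Fin n) :
    0 < ((star V * A * V) i i).re := by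
  rw [diag_eq_dot]
  exact hA.re_dotProduct_pos (col_ne_zero hV i)

lemma peierls {n : ℕ} (h : ℝ → ℝ) (hconc : ConcaveOn ℝ (Set.Ioi 0) h)
    {A : Matrix (Fin n) (Fin n) ℂ} (hA : A.PosDef)
    {V : Matrix (Fin n) (Fin n) ℂ} (hV : V ∈ Matrix.unitaryGroup (Fin n) ℂ) :
    ∑ j, h (hA.1.eigenvalues j) ≤ ∑ i, h ((star V * A * V) i i).re := by
  set U : Matrix (Fin n) (Fin n) ℂ := (hA.1.eigenvectorUnitary : Matrix (Fin n) (Fin n) ℂ) with hU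
  set W : Matrix (Fin n) (Fin n) ℂ := star U * V with hW
  have hUu : U ∈ Matrix.unitaryGroup (Fin n) ℂ := hA.1.eigenvectorUnitary.2
  have hWu : W ∈ Matrix.unitaryGroup (Fin n) ℂ := mul_mem (Unitary.star_mem hUu) hV
  set w : Fin n → Fin n → ℝ := fun j i => Complex.normSq (W j i) with hw
  have hcol : ∀ i, ∑ j, w j i = 1 := by
    intro i
    have h1 : (star W * W) i i = 1 := by
      rw [(Matrix.mem_unitaryGroup_iff').mp hWu]; simp
    have h2 : (star W * W) i i = ((∑ j, w j i : ℝ) : ℂ) := by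
      simp only [Matrix.mul_apply, Matrix.star_apply, hw, Complex.ofReal_sum]
      exact Finset.sum_congr rfl fun j _ => by
        rw [RCLike.star_def, ← Complex.normSq_eq_conj_mul_self]
    rw [h2] at h1
    exact_mod_cast h1
  have hrow : ∀ j, ∑ i, w j i = 1 := by
    intro j
    have h1 : (W * star W) j j = 1 := by
      rw [(Matrix.mem_unitaryGroup_iff).mp hWu]; simp
    have h2 : (W * star W) j j = ((∑ i, w j i : ℝ) : ℂ) := by
      simp only [Matrix.mul_apply, Matrix.star_apply, hw, Complex.ofReal_sum]
      exact Finset.sum_congr rfl fun i _ => by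
        rw [RCLike.star_def, Complex.mul_conj]
    rw [h2] at h1
    exact_mod_cast h1
  have hdiag : ∀ i, ((star V * A * V) i i).re = ∑ j, w j i * hA.1.eigenvalues j := by
    intro i
    have hsp := hA.1.spectral_theorem
    have hrw : star V * A * V
        = star W * diagonal (RCLike.ofReal ∘ hA.1.eigenvalues) * W := by
      rw [hW, Matrix.star_mul, star_star]
      conv_lhs => rw [hsp, Unitary.conjStarAlgAut_apply]
      simp only [Matrix.mul_assoc]
      rfl
    rw [hrw, Matrix.mul_assoc, Matrix.mul_apply, Complex.re_sum]
    refine Finset.sum_congr rfl fun j _ => ?_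
    rw [Matrix.diagonal_mul, Matrix.star_apply]
    simp only [RCLike.star_def]
    have hcoe : ((RCLike.ofReal ∘ hA.1.eigenvalues) j : ℂ) = ((hA.1.eigenvalues j : ℝ) : ℂ) := rfl
    rw [hcoe, show (starRingEnd ℂ) (W j i) * (((hA.1.eigenvalues j : ℝ) : ℂ) * W j i)
        = ((hA.1.eigenvalues j : ℝ) : ℂ) * (W j i * (starRingEnd ℂ) (W j i)) by ring,
      Complex.mul_conj, ← Complex.ofReal_mul, Complex.ofReal_re]
    simp only [hw]
    ring
  calc ∑ j, h (hA.1.eigenvalues j) = ∑ i, ∑ j, w j i * h (hA.1.eigenvalues j) := by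
        rw [Finset.sum_comm]
        refine Finset.sum_congr rfl fun j _ => ?_
        rw [← Finset.sum_mul, hrow j, one_mul]
    _ ≤ ∑ i, h ((star V * A * V) i i).re := by
        refine Finset.sum_le_sum fun i _ => ?_
        rw [hdiag i]
        have := hconc.le_map_sum (t := Finset.univ) (w := fun j => w j i)
          (p := fun j => hA.1.eigenvalues j)
          (fun j _ => Complex.normSq_nonneg _) (hcol i)
          (fun j _ => hA.eigenvalues_pos j)
        simpa [smul_eq_mul] using this

theorem stmt3 {n : ℕ} (h : ℝ → ℝ) (hconc : ConcaveOn ℝ (Set.Ioi 0) h)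
    (A B : Matrix (Fin n) (Fin n) ℂ) (hA : A.PosDef) (hB : B.PosDef) :
    (trF h A + trF h B) / 2 ≤ trF h (((1:ℝ)/2) • (A + B)) := by
  set C : Matrix (Fin n) (Fin n) ℂ := ((1:ℝ)/2) • (A + B) with hCdef
  have hC : C.PosDef := by
    refine Matrix.PosDef.of_dotProduct_mulVec_pos ?_ ?_
    · show Cᴴ = C
      rw [hCdef, Matrix.conjTranspose_smul, (hA.1.add hB.1).eq, star_trivial]
    · intro x hx
      have h1 := hA.dotProduct_mulVec_pos hx
      have h2 := hB.dotProduct_mulVec_pos hx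
      rw [hCdef, Matrix.smul_mulVec, Matrix.add_mulVec, dotProduct_smul,
        dotProduct_add, Complex.real_smul]
      exact mul_pos (by exact_mod_cast Complex.zero_lt_real.mpr (by norm_num)) (add_pos h1 h2)
  set V : Matrix (Fin n) (Fin n) ℂ := (hC.1.eigenvectorUnitary : Matrix (Fin n) (Fin n) ℂ)
    with hVdef
  have hVu : V ∈ Matrix.unitaryGroup (Fin n) ℂ := hC.1.eigenvectorUnitary.2
  have hlam : ∀ i, hC.1.eigenvalues i = ((star V * C * V) i i).re := by
    intro i
    rw [hVdef, ← Unitary.conjStarAlgAut_star_apply (S := ℂ),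
      Matrix.IsHermitian.conjStarAlgAut_star_eigenvectorUnitary hC.1, Matrix.diagonal_apply_eq]
    rfl
  have hsplit : ∀ i, ((star V * C * V) i i).re
      = (((star V * A * V) i i).re + ((star V * B * V) i i).re) / 2 := by
    intro i
    have : star V * C * V = ((1:ℝ)/2) • (star V * A * V + star V * B * V) := by
      rw [hCdef, Matrix.mul_smul, Matrix.smul_mul, Matrix.mul_add, Matrix.add_mul]
    rw [this]
    simp only [Matrix.smul_apply, Matrix.add_apply, Complex.smul_re, Complex.add_re,
      smul_eq_mul]
    ring
  rw [trF, trF, trF, dif_pos hA.1, dif_pos hB.1, dif_pos hC.1]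
  calc (∑ j, h (hA.1.eigenvalues j) + ∑ j, h (hB.1.eigenvalues j)) / 2
      ≤ (∑ i, h ((star V * A * V) i i).re + ∑ i, h ((star V * B * V) i i).re) / 2 := by
        have := peierls h hconc hA hVu
        have := peierls h hconc hB hVu
        linarith
    _ = ∑ i, (h ((star V * A * V) i i).re + h ((star V * B * V) i i).re) / 2 := by
        rw [← Finset.sum_add_distrib, Finset.sum_div]
    _ ≤ ∑ i, h (hC.1.eigenvalues i) := by
        refine Finset.sum_le_sum fun i _ => ?_
        rw [hlam i, hsplit i]
        have key := hconc.2 (Set.mem_Ioi.mpr (diag_pos hA hVu i))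
          (Set.mem_Ioi.mpr (diag_pos hB hVu i))
          (by norm_num : (0:ℝ) ≤ 1/2) (by norm_num : (0:ℝ) ≤ 1/2) (by norm_num)
        simp only [smul_eq_mul] at key
        rw [show (((star V * A * V) i i).re + ((star V * B * V) i i).re) / 2
            = 1/2 * ((star V * A * V) i i).re + 1/2 * ((star V * B * V) i i).re by ring]
        linarith
end

section
/- Let f : J → ℝ be monotone nondecreasing on an interval J, and let A, B be Hermitian n×n matrices with A ≤ B (in the Loewner order) and spectra of A and B contained in J. Then Tr f(A) ≤ Tr f(B). -/
open Matrix
open scoped ComplexOrder InnerProductSpace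

namespace StmtAux

variable {n : ℕ}

lemma quad_re (b : OrthonormalBasis (Fin n) ℂ (EuclideanSpace ℂ (Fin n))) (μ : Fin n → ℝ)
    (T : EuclideanSpace ℂ (Fin n) →ₗ[ℂ] EuclideanSpace ℂ (Fin n))
    (hT : ∀ j, T (b j) = (μ j : ℂ) • b j) (x : EuclideanSpace ℂ (Fin n)) :
    (⟪x, T x⟫_ℂ).re = ∑ j, μ j * ‖b.repr x j‖ ^ 2 := by
  have hTx : T x = ∑ j, b.repr x j • ((μ j : ℂ) • b j) := by
    conv_lhs => rw [← b.sum_repr x]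
    rw [map_sum]
    simp only [_root_.map_smul, hT]
  have : ⟪x, T x⟫_ℂ = ((∑ j, μ j * ‖b.repr x j‖ ^ 2 : ℝ) : ℂ) := by
    rw [hTx, inner_sum]
    push_cast
    refine Finset.sum_congr rfl fun j _ => ?_
    have hc : ⟪x, b j⟫_ℂ = (starRingEnd ℂ) (b.repr x j) := by
      rw [b.repr_apply_apply, ← inner_conj_symm x (b j)]
    rw [inner_smul_right, inner_smul_right, hc,
      show b.repr x j * ((μ j : ℂ) * (starRingEnd ℂ) (b.repr x j)) =
        (μ j : ℂ) * (b.repr x j * (starRingEnd ℂ) (b.repr x j)) by ring,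
      Complex.mul_conj']
  rw [this, Complex.ofReal_re]

lemma coeff_zero (b : OrthonormalBasis (Fin n) ℂ (EuclideanSpace ℂ (Fin n))) (S : Set (Fin n))
    (x : EuclideanSpace ℂ (Fin n)) (hx : x ∈ Submodule.span ℂ (b '' S)) {k : Fin n}
    (hk : k ∉ S) : b.repr x k = 0 := by
  rw [b.repr_apply_apply]
  induction hx using Submodule.span_induction with
  | mem y hy =>
    obtain ⟨j, hj, rfl⟩ := hy
    exact b.orthonormal.2 (fun h => hk (h ▸ hj))
  | zero => simp
  | add y z _ _ hy hz => rw [inner_add_right, hy, hz, add_zero]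
  | smul c y _ hy => rw [inner_smul_right, hy, mul_zero]

lemma span_dim (b : OrthonormalBasis (Fin n) ℂ (EuclideanSpace ℂ (Fin n))) (S : Finset (Fin n)) :
    Module.finrank ℂ (Submodule.span ℂ (b '' ↑S)) = S.card := by
  have li : LinearIndependent ℂ (fun j : (S : Set (Fin n)) => b j) :=
    b.orthonormal.linearIndependent.comp _ Subtype.val_injective
  have h := finrank_span_eq_card li
  rw [show Set.range (fun j : (S : Set (Fin n)) => b j) = b '' ↑S by
    rw [← Set.image_eq_range]] at h
  rw [h]
  simp

lemma toEuclideanLin_eigen {A : Matrix (Fin n) (Fin n) ℂ} (hA : A.IsHermitian) (j : Fin n) :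
    toEuclideanLin A (hA.eigenvectorBasis j) =
      (hA.eigenvalues j : ℂ) • hA.eigenvectorBasis j := by
  have h := hA.mulVec_eigenvectorBasis j
  ext i
  have := congrFun h i
  simpa [toEuclideanLin_apply, Complex.real_smul] using this

lemma re_inner_toEuclideanLin_nonneg {M : Matrix (Fin n) (Fin n) ℂ} (hM : M.PosSemidef)
    (x : EuclideanSpace ℂ (Fin n)) : 0 ≤ (⟪x, toEuclideanLin M x⟫_ℂ).re := by
  have := hM.re_dotProduct_nonneg ((WithLp.equiv 2 (Fin n → ℂ)) x)
  rw [EuclideanSpace.inner_eq_star_dotProduct, dotProduct_comm]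
  exact this

lemma exists_nonzero_inf (U V : Submodule ℂ (EuclideanSpace ℂ (Fin n)))
    (h : n < Module.finrank ℂ U + Module.finrank ℂ V) : ∃ x, x ∈ U ⊓ V ∧ x ≠ 0 := by
  have hsup : Module.finrank ℂ ↥(U ⊔ V) ≤ n := by
    simpa [finrank_euclideanSpace] using Submodule.finrank_le (U ⊔ V)
  have heq := Submodule.finrank_sup_add_finrank_inf_eq U V
  have hpos : 0 < Module.finrank ℂ ↥(U ⊓ V) := by omega
  have : U ⊓ V ≠ ⊥ := by
    intro hbot
    rw [hbot, finrank_bot] at hpos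
    exact lt_irrefl _ hpos
  exact Submodule.exists_mem_ne_zero_of_ne_bot this

lemma eigs_mono {A B : Matrix (Fin n) (Fin n) ℂ} (hA : A.IsHermitian) (hB : B.IsHermitian)
    (hle : (B - A).PosSemidef) (i : Fin n) :
    (hA.eigenvalues ∘ Tuple.sort hA.eigenvalues) i ≤
      (hB.eigenvalues ∘ Tuple.sort hB.eigenvalues) i := by
  set σ := Tuple.sort hA.eigenvalues with hσ
  set τ := Tuple.sort hB.eigenvalues with hτ
  set a : Fin n → ℝ := hA.eigenvalues ∘ σ with ha
  set c : Fin n → ℝ := hB.eigenvalues ∘ τ with hc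
  have hamono : Monotone a := Tuple.monotone_sort _
  have hcmono : Monotone c := Tuple.monotone_sort _
  set u : OrthonormalBasis (Fin n) ℂ (EuclideanSpace ℂ (Fin n)) :=
    hA.eigenvectorBasis.reindex σ.symm with hu
  set v : OrthonormalBasis (Fin n) ℂ (EuclideanSpace ℂ (Fin n)) :=
    hB.eigenvectorBasis.reindex τ.symm with hv
  have hueig : ∀ j, toEuclideanLin A (u j) = (a j : ℂ) • u j := by
    intro j
    simp only [hu, OrthonormalBasis.reindex_apply, Equiv.symm_symm]
    exact toEuclideanLin_eigen hA (σ j)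
  have hveig : ∀ j, toEuclideanLin B (v j) = (c j : ℂ) • v j := by
    intro j
    simp only [hv, OrthonormalBasis.reindex_apply, Equiv.symm_symm]
    exact toEuclideanLin_eigen hB (τ j)
  set U := Submodule.span ℂ (u '' ↑(Finset.Ici i)) with hU
  set V := Submodule.span ℂ (v '' ↑(Finset.Iic i)) with hV
  obtain ⟨x, hxUV, hx0⟩ : ∃ x, x ∈ U ⊓ V ∧ x ≠ 0 := by
    apply exists_nonzero_inf
    rw [hU, hV, span_dim, span_dim, Fin.card_Ici, Fin.card_Iic]
    omega
  have hxU : x ∈ U := hxUV.1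
  have hxV : x ∈ V := hxUV.2
  -- coefficients vanish
  have hucoeff : ∀ j, j < i → u.repr x j = 0 := fun j hj =>
    coeff_zero u _ x hxU (by simpa using not_le.mpr hj)
  have hvcoeff : ∀ j, i < j → v.repr x j = 0 := fun j hj =>
    coeff_zero v _ x hxV (by simpa using not_le.mpr hj)
  -- norms
  have hnormu : ∑ j, ‖u.repr x j‖ ^ 2 = ‖x‖ ^ 2 := by
    have h := quad_re u (fun _ => 1) LinearMap.id (fun j => by simp) x
    simp only [one_mul] at h
    rw [← h, LinearMap.id_apply]
    exact inner_self_eq_norm_sq (𝕜 := ℂ) x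
  have hnormv : ∑ j, ‖v.repr x j‖ ^ 2 = ‖x‖ ^ 2 := by
    have h := quad_re v (fun _ => 1) LinearMap.id (fun j => by simp) x
    simp only [one_mul] at h
    rw [← h, LinearMap.id_apply]
    exact inner_self_eq_norm_sq (𝕜 := ℂ) x
  have hqa := quad_re u a (toEuclideanLin A) hueig x
  have hqc := quad_re v c (toEuclideanLin B) hveig x
  have hlow : a i * ‖x‖ ^ 2 ≤ (⟪x, toEuclideanLin A x⟫_ℂ).re := by
    rw [hqa, ← hnormu, Finset.mul_sum]
    refine Finset.sum_le_sum fun j _ => ?_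
    rcases le_or_gt i j with h | h
    · exact mul_le_mul_of_nonneg_right (hamono h) (sq_nonneg _)
    · rw [hucoeff j h]
      simp
  have hhigh : (⟪x, toEuclideanLin B x⟫_ℂ).re ≤ c i * ‖x‖ ^ 2 := by
    rw [hqc, ← hnormv, Finset.mul_sum]
    refine Finset.sum_le_sum fun j _ => ?_
    rcases le_or_gt j i with h | h
    · exact mul_le_mul_of_nonneg_right (hcmono h) (sq_nonneg _)
    · rw [hvcoeff j h]
      simp
  have hmid : (⟪x, toEuclideanLin A x⟫_ℂ).re ≤ (⟪x, toEuclideanLin B x⟫_ℂ).re := by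
    have h0 := re_inner_toEuclideanLin_nonneg hle x
    have hsub : toEuclideanLin (B - A) x = toEuclideanLin B x - toEuclideanLin A x := by
      rw [map_sub]
      rfl
    rw [hsub, inner_sub_right] at h0
    simp only [Complex.sub_re] at h0
    linarith
  have hx2 : 0 < ‖x‖ ^ 2 := pow_pos (norm_pos_iff.mpr hx0) 2
  have := (hlow.trans hmid).trans hhigh
  exact le_of_mul_le_mul_right (by linarith [this]) hx2

end StmtAux

theorem stmt4 {n : ℕ} (J : Set ℝ) (f : ℝ → ℝ) (hf : MonotoneOn f J)
    (A B : Matrix (Fin n) (Fin n) ℂ) (hA : A.IsHermitian) (hB : B.IsHermitian)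
    (hle : (B - A).PosSemidef)
    (hsA : ∀ i, hA.eigenvalues i ∈ J) (hsB : ∀ i, hB.eigenvalues i ∈ J) :
    trF f A ≤ trF f B := by
  rw [trF, trF, dif_pos hA, dif_pos hB,
    ← Equiv.sum_comp (Tuple.sort hA.eigenvalues) (fun i => f (hA.eigenvalues i)),
    ← Equiv.sum_comp (Tuple.sort hB.eigenvalues) (fun i => f (hB.eigenvalues i))]
  refine Finset.sum_le_sum fun i _ => ?_
  exact hf (hsA _) (hsB _) (StmtAux.eigs_mono hA hB hle i)
end
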